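/- If λ' is a limit multiple of α (λ' = α·δ with δ a limit ordinal) and ι is defined by ι(α·δ + γ) = ν + κ_α·δ + κ_γ with κ normal and κ_0 = 0, then ι(λ') is a limit multiple of κ_α: ι(λ') = ν + κ_α·δ where δ is a limit ordinal, and ι(λ') is the supremum of ι(β) over β < λ'. -/

import Mathlib

open Ordinal

/-- If λ' = α·δ is a limit multiple of α, then ι(λ') = ν + κ_α·δ is a limit
multiple of κ_α, and ι(λ') is the supremum of ι(β) over β < λ'. -/
theorem stmt8 (κ : Ordinal → Ordinal) (α ν lamMax : Ordinal)
    (ι : Ordinal → Ordinal)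
    (hκ : Order.IsNormal κ) (h0 : κ 0 = 0)
    (heps : (omega0 : Ordinal) ^ α = α)
    (hν : ∃ ξ, ν = κ α * ξ)
    (hι : ∀ δ γ : Ordinal, γ < α → α * δ + γ ≤ lamMax →
      ι (α * δ + γ) = ν + κ α * δ + κ γ)
    (δ : Ordinal) (hδ : Order.IsSuccLimit δ) (hdom : α * δ ≤ lamMax) :
    ι (α * δ) = ν + κ α * δ ∧
    ι (α * δ) = ⨆ β : Set.Iio (α * δ), ι β.1 := by
  have hα : 0 < α := by
    rw [← heps]; exact opow_pos _ omega0_pos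
  have hκα : 0 < κ α := h0 ▸ hκ.strictMono hα
  -- ι of a multiple of α below α*δ
  have key : ∀ δ' ≤ δ, ι (α * δ') = ν + κ α * δ' := by
    intro δ' hδ'
    have := hι δ' 0 hα (by
      simpa using le_trans (mul_le_mul_right hδ' α) hdom)
    simpa [h0] using this
  have h1 : ι (α * δ) = ν + κ α * δ := key δ le_rfl
  refine ⟨h1, ?_⟩
  rw [h1]
  apply le_antisymm
  · -- ν + κ α * δ ≤ sup
    have hnorm : Order.IsNormal (fun x => ν + κ α * x) :=
      (isNormal_add_right ν).comp (isNormal_mul_right hκα)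
    refine (hnorm.le_iff_forall_le hδ).2 fun δ' hδ' => ?_
    have hmem : α * δ' ∈ Set.Iio (α * δ) :=
      (isNormal_mul_right hα).strictMono hδ'
    calc ν + κ α * δ' = ι (α * δ') := (key δ' hδ'.le).symm
      _ ≤ _ := Ordinal.le_iSup (fun β : Set.Iio (α * δ) => ι β.1) ⟨_, hmem⟩
  · -- sup ≤ ν + κ α * δ
    refine Ordinal.iSup_le fun ⟨β, hβ⟩ => ?_
    simp only [Set.mem_Iio] at hβ
    have hdiv : β = α * (β / α) + β % α := (Ordinal.div_add_mod β α).symm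
    have hmod : β % α < α := Ordinal.mod_lt β hα.ne'
    have hq : β / α < δ := by
      exact (Ordinal.div_lt hα.ne').2 hβ
    have := hι (β / α) (β % α) hmod (by rw [← hdiv]; exact hβ.le.trans hdom)
    rw [← hdiv] at this
    rw [this, add_assoc]
    apply add_le_add_right
    calc κ α * (β / α) + κ (β % α) ≤ κ α * (β / α) + κ α :=
          add_le_add_right (hκ.strictMono hmod).le _
      _ = κ α * (β / α + 1) := by rw [mul_add_one]
      _ ≤ κ α * δ := mul_le_mul_right (hδ.succ_lt hq).le _
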